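/- arXiv:2405.01615 — 4 statements merged into one kernel-verified Lean document; each statement's English description precedes it below -/
import Mathlib

section
/- Let k ≤ d, let θ ∈ ℝ^d be k-sparse, let g ∈ ℝ^d, and let α > 0. Let θ⁺ be any minimizer of u ↦ ‖u − (θ − αg)‖ over all k-sparse u ∈ ℝ^d (e.g., θ⁺ = trunc(θ − αg, k)). Then ⟨g, θ⁺ − θ⟩ + (1/(2α)) ‖θ⁺ − θ‖² ≤ 0. -/
open scoped RealInnerProductSpace

/-- The `L₀` pseudo-norm: number of nonzero coordinates. -/
noncomputable def l0norm {d : ℕ} (z : EuclideanSpace ℝ (Fin d)) : ℕ :=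
  (Finset.univ.filter fun i => z i ≠ 0).card

/-- Basic descent inequality for the hard-thresholding update: if `θ` is `k`-sparse and
`θ⁺` is a Euclidean projection of `θ − αg` onto the `k`-sparse vectors, then
`⟨g, θ⁺ − θ⟩ + (1/(2α))‖θ⁺ − θ‖² ≤ 0`. -/
theorem hard_thresholding_descent_inequality
    (d k : ℕ) (hk : k ≤ d) (θ g θplus : EuclideanSpace ℝ (Fin d)) (α : ℝ) (hα : 0 < α)
    (hθ : l0norm θ ≤ k) (hθplus : l0norm θplus ≤ k)
    (hmin : ∀ u : EuclideanSpace ℝ (Fin d), l0norm u ≤ k →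
      ‖θplus - (θ - α • g)‖ ≤ ‖u - (θ - α • g)‖) :
    ⟪g, θplus - θ⟫ + (1 / (2 * α)) * ‖θplus - θ‖ ^ 2 ≤ 0 := by
  have h := hmin θ hθ
  have h1 : θ - (θ - α • g) = α • g := by abel
  have h2 : θplus - (θ - α • g) = (θplus - θ) + α • g := by abel
  rw [h1, h2] at h
  have hsq : ‖(θplus - θ) + α • g‖ ^ 2 ≤ ‖α • g‖ ^ 2 := by
    exact pow_le_pow_left₀ (norm_nonneg _) h 2
  rw [norm_add_sq_real] at hsq
  have hin : ⟪θplus - θ, α • g⟫ = α * ⟪g, θplus - θ⟫ := by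
    rw [real_inner_smul_right, real_inner_comm]
  rw [hin] at hsq
  have key : ‖θplus - θ‖ ^ 2 + 2 * α * ⟪g, θplus - θ⟫ ≤ 0 := by nlinarith
  have ht : (0:ℝ) < 1 / (2 * α) := by positivity
  have h3 := mul_le_mul_of_nonneg_left key ht.le
  have h4 : (1 / (2 * α)) * (2 * α) = 1 := by field_simp
  nlinarith [h3, h4]
end

section
/- Let G : ℝ^d → ℝ be differentiable with L-Lipschitz gradient (L > 0). Let k ≤ d, let θ ∈ ℝ^d be k-sparse, let g ∈ ℝ^d, let α > 0, and let θ⁺ be any minimizer of u ↦ ‖u − (θ − αg)‖ over all k-sparse u ∈ ℝ^d. Then ⟨g − ∇G(θ), θ⁺ − θ⟩ + (1/2)(1/α − L) ‖θ⁺ − θ‖² ≤ G(θ) − G(θ⁺). -/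
open scoped RealInnerProductSpace

lemma descent_lemma {d : ℕ} (G : EuclideanSpace ℝ (Fin d) → ℝ) (L : ℝ)
    (hGdiff : Differentiable ℝ G)
    (hGlip : ∀ x y : EuclideanSpace ℝ (Fin d),
      ‖gradient G x - gradient G y‖ ≤ L * ‖x - y‖)
    (x y : EuclideanSpace ℝ (Fin d)) :
    G y ≤ G x + ⟪gradient G x, y - x⟫ + L / 2 * ‖y - x‖ ^ 2 := by
  set v := y - x with hv
  set h : ℝ → ℝ := fun t => G (x + t • v) - t * ⟪gradient G x, v⟫ - L / 2 * t ^ 2 * ‖v‖ ^ 2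
    with hh
  have hderiv : ∀ t : ℝ, HasDerivAt h
      (⟪gradient G (x + t • v), v⟫ - ⟪gradient G x, v⟫ - L * t * ‖v‖ ^ 2) t := by
    intro t
    have hc : HasDerivAt (fun t : ℝ => x + t • v) v t := by
      simpa using ((hasDerivAt_id t).smul_const v).const_add x
    have hG1 : HasDerivAt (fun t : ℝ => G (x + t • v)) (⟪gradient G (x + t • v), v⟫) t := by
      have := ((hGdiff (x + t • v)).hasGradientAt.hasFDerivAt).comp_hasDerivAt t hc
      exact this.congr_deriv (by simp [InnerProductSpace.toDual_apply_apply])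
    have h2 : HasDerivAt (fun t : ℝ => t * ⟪gradient G x, v⟫) (⟪gradient G x, v⟫) t := by
      simpa using (hasDerivAt_id t).mul_const (⟪gradient G x, v⟫)
    have h3 : HasDerivAt (fun t : ℝ => L / 2 * t ^ 2 * ‖v‖ ^ 2) (L * t * ‖v‖ ^ 2) t := by
      have := ((hasDerivAt_pow 2 t).const_mul (L / 2)).mul_const (‖v‖ ^ 2)
      exact this.congr_deriv (by rw [show (2:ℕ) - 1 = 1 from rfl]; push_cast; ring)
    exact (hG1.sub h2).sub h3
  have hanti : AntitoneOn h (Set.Icc (0 : ℝ) 1) := by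
    apply antitoneOn_of_deriv_nonpos (convex_Icc 0 1)
    · exact fun t _ => ((hderiv t).continuousAt).continuousWithinAt
    · exact fun t _ => (hderiv t).differentiableAt.differentiableWithinAt
    · intro t ht
      rw [interior_Icc] at ht
      rw [(hderiv t).deriv]
      have key : ⟪gradient G (x + t • v) - gradient G x, v⟫ ≤ L * t * ‖v‖ ^ 2 := by
        calc ⟪gradient G (x + t • v) - gradient G x, v⟫
            ≤ ‖gradient G (x + t • v) - gradient G x‖ * ‖v‖ := real_inner_le_norm _ _
          _ ≤ (L * ‖(x + t • v) - x‖) * ‖v‖ := by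
              have := hGlip (x + t • v) x
              exact mul_le_mul_of_nonneg_right this (norm_nonneg v)
          _ = L * t * ‖v‖ ^ 2 := by
              rw [add_sub_cancel_left, norm_smul]
              simp [abs_of_pos ht.1]
              ring
      rw [inner_sub_left] at key
      linarith
  have h01 : h 1 ≤ h 0 := hanti (by norm_num) (by norm_num) (by norm_num)
  simp only [hh, one_smul, zero_smul, add_zero, zero_mul, one_pow, mul_one, sub_zero,
    mul_zero, zero_pow] at h01
  have hxy : x + v = y := by rw [hv]; abel
  rw [hxy] at h01
  linarith

/-- One-step progress inequality for hard-thresholding with an `L`-smooth function `G`: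
`⟨g − ∇G(θ), θ⁺ − θ⟩ + (1/2)(1/α − L)‖θ⁺ − θ‖² ≤ G(θ) − G(θ⁺)`. -/
theorem hard_thresholding_smooth_progress
    (d k : ℕ) (hk : k ≤ d) (G : EuclideanSpace ℝ (Fin d) → ℝ) (L : ℝ) (hL : 0 < L)
    (hGdiff : Differentiable ℝ G)
    (hGlip : ∀ x y : EuclideanSpace ℝ (Fin d),
      ‖gradient G x - gradient G y‖ ≤ L * ‖x - y‖)
    (θ g θplus : EuclideanSpace ℝ (Fin d)) (α : ℝ) (hα : 0 < α)
    (hθ : l0norm θ ≤ k) (hθplus : l0norm θplus ≤ k)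
    (hmin : ∀ u : EuclideanSpace ℝ (Fin d), l0norm u ≤ k →
      ‖θplus - (θ - α • g)‖ ≤ ‖u - (θ - α • g)‖) :
    ⟪g - gradient G θ, θplus - θ⟫ + (1 / 2) * (1 / α - L) * ‖θplus - θ‖ ^ 2 ≤
      G θ - G θplus := by
  have hmin' := hmin θ hθ
  have h1 : θplus - (θ - α • g) = (θplus - θ) + α • g := by abel
  have h2 : θ - (θ - α • g) = α • g := by abel
  rw [h1, h2] at hmin'
  have hsq : ‖(θplus - θ) + α • g‖ ^ 2 ≤ ‖α • g‖ ^ 2 := by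
    exact pow_le_pow_left₀ (norm_nonneg _) hmin' 2
  rw [norm_add_sq_real] at hsq
  have hinner : ⟪θplus - θ, α • g⟫ = α * ⟪g, θplus - θ⟫ := by
    rw [real_inner_smul_right, real_inner_comm]
  rw [hinner] at hsq
  have key1 : α * ⟪g, θplus - θ⟫ ≤ - (1/2) * ‖θplus - θ‖ ^ 2 := by nlinarith
  have key2 := descent_lemma G L hGdiff hGlip θ θplus
  rw [inner_sub_left]
  have hα' : (0:ℝ) < 1 / α := by positivity
  have this1 : ⟪g, θplus - θ⟫ ≤ - (1 / (2 * α)) * ‖θplus - θ‖ ^ 2 := by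
    rw [← le_div_iff₀' hα] at key1
    calc ⟪g, θplus - θ⟫ ≤ (-(1/2) * ‖θplus - θ‖ ^ 2) / α := key1
      _ = -(1/(2*α)) * ‖θplus - θ‖ ^ 2 := by
          field_simp
  have heq : (1/2) * (1/α - L) * ‖θplus - θ‖ ^ 2
      = 1/(2*α) * ‖θplus - θ‖ ^ 2 - L/2 * ‖θplus - θ‖ ^ 2 := by
    field_simp
  linarith
end

section
/- Let G : ℝ^d → ℝ be differentiable with L-Lipschitz gradient (L > 0) and bounded: |G(x)| ≤ B for all x ∈ ℝ^d (B > 0). Let k ≤ d, α > 0, and let T ≥ 1. Let θ₀ ∈ ℝ^d be k-sparse, let g₀, …, g_{T−1} ∈ ℝ^d, and for each t let θ_{t+1} be a minimizer of u ↦ ‖u − (θ_t − α g_t)‖ over all k-sparse u ∈ ℝ^d. Then (1/(2α) − L) · Σ_{t=0}^{T−1} ‖θ_{t+1} − θ_t‖² ≤ 2B + (1/(2L)) · Σ_{t=0}^{T−1} ‖g_t − ∇G(θ_t)‖². -/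
open scoped RealInnerProductSpace

/-- Descent lemma for functions with `L`-Lipschitz gradient. -/
lemma descent_lemma_aux {d : ℕ} (G : EuclideanSpace ℝ (Fin d) → ℝ) (L : ℝ) (hL : 0 < L)
    (hGdiff : Differentiable ℝ G)
    (hGlip : ∀ x y : EuclideanSpace ℝ (Fin d),
      ‖gradient G x - gradient G y‖ ≤ L * ‖x - y‖)
    (x y : EuclideanSpace ℝ (Fin d)) :
    G y ≤ G x + ⟪gradient G x, y - x⟫ + L / 2 * ‖y - x‖ ^ 2 := by
  set δ := y - x with hδ
  have hgradcont : Continuous (fun z => gradient G z) := by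
    have : LipschitzWith (Real.toNNReal L) (fun z => gradient G z) := by
      refine LipschitzWith.of_dist_le_mul fun a b => ?_
      simpa [dist_eq_norm, Real.coe_toNNReal _ hL.le] using hGlip a b
    exact this.continuous
  have hline : ∀ t : ℝ, HasDerivAt (fun s : ℝ => G (x + s • δ))
      (⟪gradient G (x + t • δ), δ⟫) t := by
    intro t
    have h1 : HasFDerivAt G ((InnerProductSpace.toDual ℝ _) (gradient G (x + t • δ)))
        (x + t • δ) :=
      ((hGdiff (x + t • δ)).hasGradientAt).hasFDerivAt
    have h2 : HasDerivAt (fun s : ℝ => x + s • δ) δ t := by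
      simpa using ((hasDerivAt_id t).smul_const δ).const_add x
    convert h1.comp_hasDerivAt t h2 using 1 <;> rfl
  have hcont : Continuous fun t : ℝ => ⟪gradient G (x + t • δ), δ⟫ :=
    (Continuous.inner (hgradcont.comp (continuous_const.add (continuous_id.smul continuous_const))) continuous_const)
  have hFTC : ∫ t in (0:ℝ)..1, ⟪gradient G (x + t • δ), δ⟫ = G y - G x := by
    have := intervalIntegral.integral_eq_sub_of_hasDerivAt
      (f := fun s : ℝ => G (x + s • δ)) (f' := fun t => ⟪gradient G (x + t • δ), δ⟫)
      (a := 0) (b := 1) (fun t _ => hline t) (hcont.intervalIntegrable 0 1)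
    simpa [hδ] using this
  have hmono : ∫ t in (0:ℝ)..1, ⟪gradient G (x + t • δ), δ⟫ ≤
      ∫ t in (0:ℝ)..1, (⟪gradient G x, δ⟫ + L * t * ‖δ‖ ^ 2) := by
    apply intervalIntegral.integral_mono_on (by norm_num)
      (hcont.intervalIntegrable 0 1)
      ((by fun_prop : Continuous fun t : ℝ => ⟪gradient G x, δ⟫ + L * t * ‖δ‖ ^ 2).intervalIntegrable 0 1)
    intro t ht
    have h1 : ⟪gradient G (x + t • δ), δ⟫ - ⟪gradient G x, δ⟫ =
        ⟪gradient G (x + t • δ) - gradient G x, δ⟫ := by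
      rw [inner_sub_left]
    have h2 : ⟪gradient G (x + t • δ) - gradient G x, δ⟫ ≤
        ‖gradient G (x + t • δ) - gradient G x‖ * ‖δ‖ := real_inner_le_norm _ _
    have h3 : ‖gradient G (x + t • δ) - gradient G x‖ ≤ L * (t * ‖δ‖) := by
      have := hGlip (x + t • δ) x
      simpa [norm_smul, abs_of_nonneg ht.1] using this
    nlinarith [norm_nonneg δ, norm_nonneg (gradient G (x + t • δ) - gradient G x),
      mul_le_mul_of_nonneg_right h3 (norm_nonneg δ)]
  have hint : ∫ t in (0:ℝ)..1, (⟪gradient G x, δ⟫ + L * t * ‖δ‖ ^ 2) =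
      ⟪gradient G x, δ⟫ + L / 2 * ‖δ‖ ^ 2 := by
    rw [intervalIntegral.integral_add (intervalIntegrable_const)
      ((by fun_prop : Continuous fun t : ℝ => L * t * ‖δ‖ ^ 2).intervalIntegrable 0 1)]
    have : ∫ t in (0:ℝ)..1, L * t * ‖δ‖ ^ 2 = L / 2 * ‖δ‖ ^ 2 := by
      have : (fun t : ℝ => L * t * ‖δ‖ ^ 2) = fun t : ℝ => (L * ‖δ‖ ^ 2) * t := by
        ext t; ring
      rw [this, intervalIntegral.integral_const_mul, integral_id]
      ring
    simp [this]
  linarith [hFTC ▸ (hint ▸ hmono)]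

lemma inner_key_aux {d : ℕ} (α : ℝ) (hα : 0 < α) (θ θ' g : EuclideanSpace ℝ (Fin d))
    (h : ‖θ' - (θ - α • g)‖ ≤ ‖θ - (θ - α • g)‖) :
    ⟪g, θ' - θ⟫ ≤ -(1 / (2 * α)) * ‖θ' - θ‖ ^ 2 := by
  have e1 : θ' - (θ - α • g) = (θ' - θ) + α • g := by abel
  have e2 : θ - (θ - α • g) = α • g := by abel
  rw [e1, e2] at h
  have hsq : ‖(θ' - θ) + α • g‖ ^ 2 ≤ ‖α • g‖ ^ 2 :=
    pow_le_pow_left₀ (norm_nonneg _) h 2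
  rw [norm_add_sq_real] at hsq
  have hi : ⟪θ' - θ, α • g⟫ = α * ⟪g, θ' - θ⟫ := by
    rw [real_inner_smul_right, real_inner_comm]
  rw [hi] at hsq
  have hc : α * ⟪g, θ' - θ⟫ ≤ -(1/2) * ‖θ' - θ‖ ^ 2 := by nlinarith
  have key : α * (⟪g, θ' - θ⟫ + (1 / (2 * α)) * ‖θ' - θ‖ ^ 2) ≤ α * 0 := by
    have hhalf : α * ((1 / (2 * α)) * ‖θ' - θ‖ ^ 2) = (1/2) * ‖θ' - θ‖ ^ 2 := by
      field_simp
    nlinarith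
  have := (mul_le_mul_iff_right₀ hα).mp key
  linarith

/-- Telescoped descent bound along the hard-thresholding iterates:
`(1/(2α) − L) Σ ‖θ_{t+1} − θ_t‖² ≤ 2B + (1/(2L)) Σ ‖g_t − ∇G(θ_t)‖²`. -/
theorem hard_thresholding_telescoped_descent
    (d k : ℕ) (hk : k ≤ d) (G : EuclideanSpace ℝ (Fin d) → ℝ) (L B : ℝ)
    (hL : 0 < L) (hB : 0 < B)
    (hGdiff : Differentiable ℝ G)
    (hGlip : ∀ x y : EuclideanSpace ℝ (Fin d),
      ‖gradient G x - gradient G y‖ ≤ L * ‖x - y‖)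
    (hGbound : ∀ x, |G x| ≤ B)
    (α : ℝ) (hα : 0 < α) (T : ℕ) (hT : 1 ≤ T)
    (θ g : ℕ → EuclideanSpace ℝ (Fin d))
    (hθ0 : l0norm (θ 0) ≤ k)
    (hsparse : ∀ t < T, l0norm (θ (t + 1)) ≤ k)
    (hmin : ∀ t < T, ∀ u : EuclideanSpace ℝ (Fin d), l0norm u ≤ k →
      ‖θ (t + 1) - (θ t - α • g t)‖ ≤ ‖u - (θ t - α • g t)‖) :
    (1 / (2 * α) - L) * ∑ t ∈ Finset.range T, ‖θ (t + 1) - θ t‖ ^ 2 ≤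
      2 * B + (1 / (2 * L)) * ∑ t ∈ Finset.range T, ‖g t - gradient G (θ t)‖ ^ 2 := by
  -- sparsity of all iterates up to T
  have hθsp : ∀ t < T, l0norm (θ t) ≤ k := by
    intro t ht
    cases t with
    | zero => exact hθ0
    | succ s => exact hsparse s (Nat.lt_of_succ_lt ht)
  -- per-step bound
  have hstep : ∀ t < T, (1 / (2 * α) - L) * ‖θ (t + 1) - θ t‖ ^ 2 ≤
      (G (θ t) - G (θ (t + 1))) + (1 / (2 * L)) * ‖g t - gradient G (θ t)‖ ^ 2 := by
    intro t ht
    set δ := θ (t + 1) - θ t with hδ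
    have hik : ⟪g t, δ⟫ ≤ -(1 / (2 * α)) * ‖δ‖ ^ 2 :=
      inner_key_aux α hα (θ t) (θ (t + 1)) (g t) (hmin t ht (θ t) (hθsp t ht))
    have hdesc : G (θ (t + 1)) ≤ G (θ t) + ⟪gradient G (θ t), δ⟫ + L / 2 * ‖δ‖ ^ 2 :=
      descent_lemma_aux G L hL hGdiff hGlip (θ t) (θ (t + 1))
    have hsplit : ⟪gradient G (θ t), δ⟫ =
        ⟪g t, δ⟫ + ⟪gradient G (θ t) - g t, δ⟫ := by
      rw [inner_sub_left]; ring
    have hcs : ⟪gradient G (θ t) - g t, δ⟫ ≤ ‖g t - gradient G (θ t)‖ * ‖δ‖ := by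
      have := real_inner_le_norm (gradient G (θ t) - g t) δ
      rwa [show ‖gradient G (θ t) - g t‖ = ‖g t - gradient G (θ t)‖ from norm_sub_rev _ _] at this
    have hamgm : ‖g t - gradient G (θ t)‖ * ‖δ‖ ≤
        (1 / (2 * L)) * ‖g t - gradient G (θ t)‖ ^ 2 + L / 2 * ‖δ‖ ^ 2 := by
      have hsq : 0 ≤ (‖g t - gradient G (θ t)‖ - L * ‖δ‖) ^ 2 := sq_nonneg _
      have h2L : (0:ℝ) < 2 * L := by linarith
      have : (1 / (2 * L)) * (‖g t - gradient G (θ t)‖ - L * ‖δ‖) ^ 2 =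
          (1 / (2 * L)) * ‖g t - gradient G (θ t)‖ ^ 2 + L / 2 * ‖δ‖ ^ 2
            - ‖g t - gradient G (θ t)‖ * ‖δ‖ := by
        field_simp; ring
      nlinarith [mul_nonneg (le_of_lt (by positivity : (0:ℝ) < 1 / (2 * L))) hsq]
    linarith
  -- sum it up
  have hsum : ∑ t ∈ Finset.range T, (1 / (2 * α) - L) * ‖θ (t + 1) - θ t‖ ^ 2 ≤
      ∑ t ∈ Finset.range T, ((G (θ t) - G (θ (t + 1)))
        + (1 / (2 * L)) * ‖g t - gradient G (θ t)‖ ^ 2) :=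
    Finset.sum_le_sum fun t ht => hstep t (Finset.mem_range.mp ht)
  rw [Finset.sum_add_distrib, Finset.sum_range_sub' (fun t => G (θ t)) T] at hsum
  have htel : G (θ 0) - G (θ T) ≤ 2 * B := by
    have h0 := abs_le.mp (hGbound (θ 0))
    have hTb := abs_le.mp (hGbound (θ T))
    linarith
  rw [Finset.mul_sum, Finset.mul_sum]
  calc ∑ t ∈ Finset.range T, (1 / (2 * α) - L) * ‖θ (t + 1) - θ t‖ ^ 2
      ≤ (G (θ 0) - G (θ T)) + ∑ t ∈ Finset.range T,
        (1 / (2 * L)) * ‖g t - gradient G (θ t)‖ ^ 2 := hsum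
    _ ≤ 2 * B + ∑ t ∈ Finset.range T, (1 / (2 * L)) * ‖g t - gradient G (θ t)‖ ^ 2 := by
        linarith
end

section
/- Let G : ℝ^d → ℝ be differentiable with L-Lipschitz gradient (L > 0). Let k ≤ d, let θ ∈ ℝ^d be k-sparse, g ∈ ℝ^d, α > 0, and let θ⁺ be any minimizer of u ↦ ‖u − (θ − αg)‖ over all k-sparse u ∈ ℝ^d. Then ‖g − ∇G(θ⁺) + (1/α)(θ⁺ − θ)‖² ≤ 2‖g − ∇G(θ)‖² + (2/α)(G(θ) − G(θ⁺)) + (2L² + 3L/α)‖θ⁺ − θ‖². -/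
set_option maxHeartbeats 1000000

open scoped RealInnerProductSpace

/-- Bound on the stationarity witness for a single hard-thresholding step:
`‖g − ∇G(θ⁺) + (1/α)(θ⁺ − θ)‖² ≤ 2‖g − ∇G(θ)‖² + (2/α)(G(θ) − G(θ⁺)) + (2L² + 3L/α)‖θ⁺ − θ‖²`. -/
theorem hard_thresholding_stationarity_witness_bound
    (d k : ℕ) (hk : k ≤ d) (G : EuclideanSpace ℝ (Fin d) → ℝ) (L : ℝ) (hL : 0 < L)
    (hGdiff : Differentiable ℝ G)
    (hGlip : ∀ x y : EuclideanSpace ℝ (Fin d),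
      ‖gradient G x - gradient G y‖ ≤ L * ‖x - y‖)
    (θ g θplus : EuclideanSpace ℝ (Fin d)) (α : ℝ) (hα : 0 < α)
    (hθ : l0norm θ ≤ k) (hθplus : l0norm θplus ≤ k)
    (hmin : ∀ u : EuclideanSpace ℝ (Fin d), l0norm u ≤ k →
      ‖θplus - (θ - α • g)‖ ≤ ‖u - (θ - α • g)‖) :
    ‖g - gradient G θplus + α⁻¹ • (θplus - θ)‖ ^ 2 ≤
      2 * ‖g - gradient G θ‖ ^ 2 + (2 / α) * (G θ - G θplus) +
        (2 * L ^ 2 + 3 * L / α) * ‖θplus - θ‖ ^ 2 := by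
  set β := α⁻¹ with hβdef
  have hβ : 0 < β := inv_pos.2 hα
  have hαβ : α * β = 1 := mul_inv_cancel₀ hα.ne'
  set Δ := θplus - θ with hΔ
  set a := g - gradient G θplus with ha
  -- key1 : inner g Δ bound
  have hsq : ‖Δ + α • g‖ ^ 2 ≤ ‖α • g‖ ^ 2 := by
    have h := hmin θ hθ
    have e1 : θplus - (θ - α • g) = Δ + α • g := by rw [hΔ]; abel
    have e2 : θ - (θ - α • g) = α • g := by abel
    rw [e1, e2] at h
    exact pow_le_pow_left₀ (norm_nonneg _) h 2
  have key1 : α * ⟪g, Δ⟫ ≤ -(‖Δ‖ ^ 2 / 2) := by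
    rw [norm_add_sq_real, real_inner_smul_right] at hsq
    rw [real_inner_comm] at hsq
    linarith
  -- key2 : descent lemma
  have key2 : G θplus ≤ G θ + ⟪gradient G θ, Δ⟫ + L / 2 * ‖Δ‖ ^ 2 :=
    descent_lemma G L hGdiff hGlip θ θplus
  -- key3 : Lipschitz inner bound
  have key3 : ⟪gradient G θ, Δ⟫ - ⟪gradient G θplus, Δ⟫ ≤ L * ‖Δ‖ ^ 2 := by
    calc ⟪gradient G θ, Δ⟫ - ⟪gradient G θplus, Δ⟫
        = ⟪gradient G θ - gradient G θplus, Δ⟫ := by rw [inner_sub_left]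
      _ ≤ ‖gradient G θ - gradient G θplus‖ * ‖Δ‖ := real_inner_le_norm _ _
      _ ≤ (L * ‖θ - θplus‖) * ‖Δ‖ :=
          mul_le_mul_of_nonneg_right (hGlip _ _) (norm_nonneg _)
      _ = L * ‖Δ‖ ^ 2 := by rw [show θ - θplus = -Δ by rw [hΔ]; abel, norm_neg]; ring
  -- key4 : ‖a‖² bound
  have key4 : ‖a‖ ^ 2 ≤ 2 * ‖g - gradient G θ‖ ^ 2 + 2 * L ^ 2 * ‖Δ‖ ^ 2 := by
    have e : a = (g - gradient G θ) + (gradient G θ - gradient G θplus) := by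
      rw [ha]; abel
    rw [e, norm_add_sq_real]
    have hcs : ⟪g - gradient G θ, gradient G θ - gradient G θplus⟫ ≤
        ‖g - gradient G θ‖ * ‖gradient G θ - gradient G θplus‖ := real_inner_le_norm _ _
    have hl : ‖gradient G θ - gradient G θplus‖ ≤ L * ‖Δ‖ := by
      calc ‖gradient G θ - gradient G θplus‖ ≤ L * ‖θ - θplus‖ := hGlip _ _
        _ = L * ‖Δ‖ := by rw [show θ - θplus = -Δ by rw [hΔ]; abel, norm_neg]
    nlinarith [norm_nonneg (g - gradient G θ), norm_nonneg (gradient G θ - gradient G θplus),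
      norm_nonneg Δ, hL.le, sq_nonneg (‖g - gradient G θ‖ - ‖gradient G θ - gradient G θplus‖)]
  -- LHS expansion
  have lhs_eq : ‖g - gradient G θplus + α⁻¹ • (θplus - θ)‖ ^ 2 =
      ‖a‖ ^ 2 + 2 * β * (⟪g, Δ⟫ - ⟪gradient G θplus, Δ⟫) + β ^ 2 * ‖Δ‖ ^ 2 := by
    rw [show g - gradient G θplus + α⁻¹ • (θplus - θ) = a + β • Δ by rw [ha, hΔ, hβdef]]
    rw [norm_add_sq_real, real_inner_smul_right, norm_smul, ha, inner_sub_left]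
    rw [mul_pow, Real.norm_eq_abs, sq_abs]
    ring
  rw [lhs_eq]
  -- arithmetic combination
  have h1' : ⟪g, Δ⟫ ≤ -(‖Δ‖ ^ 2 / 2) * β := by
    have := mul_le_mul_of_nonneg_right key1 hβ.le
    calc ⟪g, Δ⟫ = α * ⟪g, Δ⟫ * β := by
          rw [mul_comm α _, mul_assoc, hαβ, mul_one]
      _ ≤ -(‖Δ‖ ^ 2 / 2) * β := this
  have hneg : -⟪gradient G θplus, Δ⟫ ≤ (G θ - G θplus) + (3 * L / 2) * ‖Δ‖ ^ 2 := by
    linarith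
  have hfinal : 2 / α = 2 * β := by rw [hβdef]; ring
  have hfinal2 : 3 * L / α = 3 * L * β := by rw [hβdef]; ring
  rw [show 2 * L ^ 2 + 3 * L / α = 2 * L ^ 2 + 3 * L * β by rw [hfinal2], hfinal]
  nlinarith [mul_le_mul_of_nonneg_left hneg (by positivity : (0:ℝ) ≤ 2 * β),
    mul_le_mul_of_nonneg_left h1' (by positivity : (0:ℝ) ≤ 2 * β), key4, sq_nonneg β,
    mul_pos hβ hβ]
end
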